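/- Let (a,b) ⊂ ℝ and a partition a = x₀ < x₁ < … < x_M = b with hᵢ = xᵢ - x_{i-1}. For any piecewise C¹ function v on the partition (piecewise polynomial suffices), and any x ∈ (a,b), |v(x)| ≤ |v(a)| + Σᵢ hᵢ^{1/2} ‖v'‖_{L²(xᵢ₋₁,xᵢ)} + Σᵢ ĥ(xᵢ)^{1/2} ĥ(xᵢ)^{-1/2} |v(xᵢ⁺) - v(xᵢ⁻)|, and consequently ‖v‖_{L^∞(a,b)} ≤ |v(a)| + (b-a)^{1/2} ‖v'‖_{L²} + (Σᵢ ĥ(xᵢ))^{1/2} (Σᵢ ĥ(xᵢ)^{-1} |v(xᵢ⁺) - v(xᵢ⁻)|²)^{1/2}, where ĥ(xᵢ) = min(hᵢ, hᵢ₊₁). -/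

import Mathlib

open Real Set

/-- Cauchy–Schwarz for interval integrals of continuous functions. -/
lemma int_abs_le_sqrt (g : ℝ → ℝ) (hg : Continuous g) {a b : ℝ} (hab : a ≤ b) :
    (∫ t in a..b, |g t|) ≤ Real.sqrt (b - a) * Real.sqrt (∫ t in a..b, (g t) ^ 2) := by
  set L : ℝ := b - a with hLdef
  set I : ℝ := ∫ t in a..b, (g t) ^ 2 with hIdef
  have hL : 0 ≤ L := by simp [hLdef]; linarith
  have hI : 0 ≤ I := intervalIntegral.integral_nonneg hab fun t _ => sq_nonneg _
  have hint2 : IntervalIntegrable (fun t => (g t) ^ 2) MeasureTheory.volume a b :=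
    ((hg.pow 2).intervalIntegrable a b)
  have key : ∀ c : ℝ, 0 < c → (∫ t in a..b, |g t|) ≤ (c * L + I / c) / 2 := by
    intro c hc
    have h1 : (∫ t in a..b, |g t|) ≤ ∫ t in a..b, (c + (g t) ^ 2 / c) / 2 := by
      apply intervalIntegral.integral_mono_on hab (hg.abs.intervalIntegrable a b)
      · exact ((continuous_const.add ((hg.pow 2).div_const c)).div_const 2).intervalIntegrable a b
      · intro t _
        have h3 : |g t| ^ 2 = (g t) ^ 2 := sq_abs _
        rw [le_div_iff₀ (by norm_num : (0:ℝ) < 2), ← sub_nonneg]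
        have heq : c + g t ^ 2 / c - |g t| * 2 = (|g t| - c) ^ 2 / c := by
          rw [← h3]
          field_simp
          ring_nf
        rw [heq]
        positivity
    have h2 : (∫ t in a..b, (c + (g t) ^ 2 / c) / 2) = (c * L + I / c) / 2 := by
      have : (∫ t in a..b, (c + (g t) ^ 2 / c)) = c * L + I / c := by
        rw [intervalIntegral.integral_add (intervalIntegrable_const) (hint2.div_const c),
          intervalIntegral.integral_const, intervalIntegral.integral_div]
        simp [hLdef, hIdef, smul_eq_mul, mul_comm]
      rw [intervalIntegral.integral_div, this]
    linarith [h1, h2.le, h2.ge]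
  rcases eq_or_lt_of_le hL with hL0 | hLpos
  · have hba : b = a := by simp [hLdef] at hL0; linarith
    subst hba
    simp [intervalIntegral.integral_same]
    positivity
  rcases eq_or_lt_of_le hI with hI0 | hIpos
  · have : ∀ ε > (0:ℝ), (∫ t in a..b, |g t|) ≤ Real.sqrt L * Real.sqrt I + ε := by
      intro ε hε
      have hc : 0 < 2 * ε / L := by positivity
      have := key _ hc
      rw [← hI0] at this
      calc (∫ t in a..b, |g t|) ≤ (2 * ε / L * L + 0 / (2 * ε / L)) / 2 := this
        _ = ε := by field_simp; ring
        _ ≤ Real.sqrt L * Real.sqrt I + ε := by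
              linarith [mul_nonneg (Real.sqrt_nonneg L) (Real.sqrt_nonneg I)]
    exact le_of_forall_pos_le_add this
  · have hc : 0 < Real.sqrt (I / L) := Real.sqrt_pos.2 (by positivity)
    refine (key _ hc).trans (le_of_eq ?_)
    have hsL : Real.sqrt L > 0 := Real.sqrt_pos.2 hLpos
    have hsI : Real.sqrt I > 0 := Real.sqrt_pos.2 hIpos
    have hdiv : Real.sqrt (I / L) = Real.sqrt I / Real.sqrt L := Real.sqrt_div hI L
    have hL2 : Real.sqrt L ^ 2 = L := Real.sq_sqrt hL
    have hI2 : Real.sqrt I ^ 2 = I := Real.sq_sqrt hI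
    have e1 : Real.sqrt (I / L) * L = Real.sqrt I * Real.sqrt L := by
      rw [hdiv, div_mul_eq_mul_div, div_eq_iff hsL.ne']
      linear_combination -Real.sqrt I * hL2
    have e2 : I / Real.sqrt (I / L) = Real.sqrt I * Real.sqrt L := by
      rw [hdiv, div_div_eq_mul_div, div_eq_iff hsI.ne']
      linear_combination -Real.sqrt L * hI2
    rw [e1, e2]
    ring

/-- FTC + Cauchy–Schwarz bound on one subinterval. -/
lemma ftc_bound (f : ℝ → ℝ) (hf : ContDiff ℝ 1 f) {a b ξ : ℝ} (hξ : ξ ∈ Set.Icc a b) :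
    |f ξ - f a| ≤ Real.sqrt (b - a) * Real.sqrt (∫ t in a..b, (deriv f t) ^ 2) := by
  obtain ⟨h1, h2⟩ := hξ
  have hab : a ≤ b := le_trans h1 h2
  have hd : Continuous (deriv f) := hf.continuous_deriv le_rfl
  have hftc : (∫ t in a..ξ, deriv f t) = f ξ - f a :=
    intervalIntegral.integral_deriv_eq_sub
      (fun t _ => (hf.differentiable one_ne_zero).differentiableAt) (hd.intervalIntegrable a ξ)
  rw [← hftc]
  calc |∫ t in a..ξ, deriv f t| ≤ ∫ t in a..ξ, |deriv f t| :=
        intervalIntegral.abs_integral_le_integral_abs h1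
    _ ≤ ∫ t in a..b, |deriv f t| :=
        intervalIntegral.integral_mono_interval le_rfl h1 h2
          (Filter.Eventually.of_forall fun t => abs_nonneg _) (hd.abs.intervalIntegrable a b)
    _ ≤ _ := int_abs_le_sqrt _ hd hab

theorem discrete_sobolev_1d (M : ℕ) (hM : 1 ≤ M) (x : ℕ → ℝ)
    (hx : ∀ i < M, x i < x (i + 1))
    (v : ℕ → ℝ → ℝ) (hv : ∀ i < M, ContDiff ℝ 1 (v i)) :
    let h : ℕ → ℝ := fun i => x (i + 1) - x i
    let hhat : ℕ → ℝ := fun i => min (h (i - 1)) (h i)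
    let J : ℕ → ℝ := fun i => |v i (x i) - v (i - 1) (x i)|
    (∀ i < M, ∀ ξ ∈ Set.Icc (x i) (x (i + 1)),
      |v i ξ| ≤ |v 0 (x 0)|
        + (∑ k ∈ Finset.range M,
            Real.sqrt (h k) * Real.sqrt (∫ t in (x k)..(x (k + 1)), (deriv (v k) t) ^ 2))
        + ∑ k ∈ Finset.Ico 1 M, Real.sqrt (hhat k) * (Real.sqrt (hhat k))⁻¹ * J k) ∧
    (∀ i < M, ∀ ξ ∈ Set.Icc (x i) (x (i + 1)),
      |v i ξ| ≤ |v 0 (x 0)|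
        + Real.sqrt (x M - x 0) *
            Real.sqrt (∑ k ∈ Finset.range M, ∫ t in (x k)..(x (k + 1)), (deriv (v k) t) ^ 2)
        + Real.sqrt (∑ k ∈ Finset.Ico 1 M, hhat k) *
            Real.sqrt (∑ k ∈ Finset.Ico 1 M, (hhat k)⁻¹ * (J k) ^ 2)) := by
  intro h hhat J
  have hdef : ∀ k, h k = x (k + 1) - x k := fun k => rfl
  have hhatdef : ∀ k, hhat k = min (h (k - 1)) (h k) := fun k => rfl
  have hJdef : ∀ k, J k = |v k (x k) - v (k - 1) (x k)| := fun k => rfl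
  set T : ℕ → ℝ := fun k =>
    Real.sqrt (h k) * Real.sqrt (∫ t in (x k)..(x (k + 1)), (deriv (v k) t) ^ 2) with hT
  set I : ℕ → ℝ := fun k => ∫ t in (x k)..(x (k + 1)), (deriv (v k) t) ^ 2 with hI
  have hTnn : ∀ k, 0 ≤ T k := fun k => mul_nonneg (Real.sqrt_nonneg _) (Real.sqrt_nonneg _)
  have hJnn : ∀ k, 0 ≤ J k := fun k => abs_nonneg _
  have hhpos : ∀ k < M, 0 < h k := fun k hk => sub_pos.2 (hx k hk)
  have hInn : ∀ k < M, 0 ≤ I k := fun k hk =>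
    intervalIntegral.integral_nonneg (hx k hk).le fun t _ => sq_nonneg _
  have hhatpos : ∀ k ∈ Finset.Ico 1 M, 0 < hhat k := by
    intro k hk
    obtain ⟨hk1, hkM⟩ := Finset.mem_Ico.1 hk
    exact lt_min (hhpos (k - 1) (lt_of_le_of_lt (Nat.pred_le k) hkM)) (hhpos k hkM)
  -- key pointwise estimate with partial sums
  have claim : ∀ i, i < M → ∀ ξ ∈ Set.Icc (x i) (x (i + 1)),
      |v i ξ| ≤ |v 0 (x 0)| + (∑ k ∈ Finset.range (i + 1), T k)
        + ∑ k ∈ Finset.Ico 1 (i + 1), J k := by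
    intro i
    induction i with
    | zero =>
      intro hi ξ hξ
      have hb := ftc_bound (v 0) (hv 0 hi) hξ
      have e2 : |v 0 ξ| - |v 0 (x 0)| ≤ T 0 := by
        refine le_trans (abs_sub_abs_le_abs_sub _ _) ?_
        rw [hT]
        exact hb
      simp only [zero_add, Finset.range_one, Finset.sum_singleton, Finset.Ico_self,
        Finset.sum_empty, add_zero]
      linarith
    | succ i ih =>
      intro hi ξ hξ
      have hiM : i < M := Nat.lt_of_succ_lt hi
      have h1 := ih hiM (x (i + 1)) ⟨(hx i hiM).le, le_rfl⟩
      have e2 : |v (i + 1) ξ| - |v (i + 1) (x (i + 1))| ≤ T (i + 1) := by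
        refine le_trans (abs_sub_abs_le_abs_sub _ _) ?_
        rw [hT]
        exact ftc_bound (v (i + 1)) (hv (i + 1) hi) hξ
      have e3 : |v (i + 1) (x (i + 1))| - |v i (x (i + 1))| ≤ J (i + 1) := by
        refine le_trans (abs_sub_abs_le_abs_sub _ _) ?_
        rw [hJdef]
        simp
      rw [Finset.sum_range_succ, Finset.sum_Ico_succ_top (Nat.succ_le_succ (Nat.zero_le i))]
      linarith
  -- full-sum pointwise estimate
  have full : ∀ i < M, ∀ ξ ∈ Set.Icc (x i) (x (i + 1)),
      |v i ξ| ≤ |v 0 (x 0)| + (∑ k ∈ Finset.range M, T k) + ∑ k ∈ Finset.Ico 1 M, J k := by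
    intro i hi ξ hξ
    refine le_trans (claim i hi ξ hξ) ?_
    have s1 : (∑ k ∈ Finset.range (i + 1), T k) ≤ ∑ k ∈ Finset.range M, T k :=
      Finset.sum_le_sum_of_subset_of_nonneg (Finset.range_subset_range.2 hi)
        (fun k _ _ => hTnn k)
    have s2 : (∑ k ∈ Finset.Ico 1 (i + 1), J k) ≤ ∑ k ∈ Finset.Ico 1 M, J k :=
      Finset.sum_le_sum_of_subset_of_nonneg (Finset.Ico_subset_Ico le_rfl hi)
        (fun k _ _ => hJnn k)
    linarith
  constructor
  · intro i hi ξ hξ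
    have e1 : (∑ k ∈ Finset.Ico 1 M, Real.sqrt (hhat k) * (Real.sqrt (hhat k))⁻¹ * J k)
        = ∑ k ∈ Finset.Ico 1 M, J k := by
      refine Finset.sum_congr rfl fun k hk => ?_
      rw [mul_inv_cancel₀ (Real.sqrt_pos.2 (hhatpos k hk)).ne', one_mul]
    rw [e1]
    exact full i hi ξ hξ
  · intro i hi ξ hξ
    have CS1 : (∑ k ∈ Finset.range M, T k)
        ≤ Real.sqrt (x M - x 0) * Real.sqrt (∑ k ∈ Finset.range M, I k) := by
      have hcs := Real.sum_mul_le_sqrt_mul_sqrt (Finset.range M)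
        (fun k => Real.sqrt (h k)) (fun k => Real.sqrt (I k))
      have e1 : (∑ k ∈ Finset.range M, Real.sqrt (h k) ^ 2) = x M - x 0 := by
        rw [Finset.sum_congr rfl fun k hk =>
          Real.sq_sqrt (hhpos k (Finset.mem_range.1 hk)).le]
        simpa [hdef] using Finset.sum_range_sub x M
      have e2 : (∑ k ∈ Finset.range M, Real.sqrt (I k) ^ 2)
          = ∑ k ∈ Finset.range M, I k :=
        Finset.sum_congr rfl fun k hk => Real.sq_sqrt (hInn k (Finset.mem_range.1 hk))
      rw [e1, e2] at hcs
      exact hcs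
    have CS2 : (∑ k ∈ Finset.Ico 1 M, J k)
        ≤ Real.sqrt (∑ k ∈ Finset.Ico 1 M, hhat k) *
          Real.sqrt (∑ k ∈ Finset.Ico 1 M, (hhat k)⁻¹ * (J k) ^ 2) := by
      have hcs := Real.sum_mul_le_sqrt_mul_sqrt (Finset.Ico 1 M)
        (fun k => Real.sqrt (hhat k)) (fun k => Real.sqrt ((hhat k)⁻¹) * J k)
      have e0 : (∑ k ∈ Finset.Ico 1 M, Real.sqrt (hhat k) * (Real.sqrt ((hhat k)⁻¹) * J k))
          = ∑ k ∈ Finset.Ico 1 M, J k := by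
        refine Finset.sum_congr rfl fun k hk => ?_
        have hp := hhatpos k hk
        rw [Real.sqrt_inv, ← mul_assoc, mul_inv_cancel₀ (Real.sqrt_pos.2 hp).ne', one_mul]
      have e1 : (∑ k ∈ Finset.Ico 1 M, Real.sqrt (hhat k) ^ 2)
          = ∑ k ∈ Finset.Ico 1 M, hhat k :=
        Finset.sum_congr rfl fun k hk => Real.sq_sqrt (hhatpos k hk).le
      have e2 : (∑ k ∈ Finset.Ico 1 M, (Real.sqrt ((hhat k)⁻¹) * J k) ^ 2)
          = ∑ k ∈ Finset.Ico 1 M, (hhat k)⁻¹ * (J k) ^ 2 := by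
        refine Finset.sum_congr rfl fun k hk => ?_
        rw [mul_pow, Real.sq_sqrt (inv_nonneg.2 (hhatpos k hk).le)]
      rw [e0, e1, e2] at hcs
      exact hcs
    have := full i hi ξ hξ
    calc |v i ξ| ≤ |v 0 (x 0)| + (∑ k ∈ Finset.range M, T k) + ∑ k ∈ Finset.Ico 1 M, J k := this
      _ ≤ _ := by
        rw [hI] at CS1
        linarith
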